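/- arXiv:2402.19461 — 7 statements merged into one kernel-verified Lean document; each statement's English description precedes it below -/
import Mathlib

section
/- Every torsion-free virtually cyclic group is cyclic (in particular, infinite cyclic or trivial). -/
/-- A group is virtually cyclic if it has a cyclic subgroup of finite index. -/
def VirtuallyCyclic (G : Type*) [Group G] : Prop :=
  ∃ H : Subgroup G, IsCyclic H ∧ H.FiniteIndex

/-- Every torsion-free virtually cyclic group is cyclic. -/
theorem stmt_0 (G : Type*) [Group G]
    (htf : ∀ g : G, g ≠ 1 → ¬ IsOfFinOrder g)
    (hvc : VirtuallyCyclic G) : IsCyclic G := by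
  obtain ⟨H, hcyc, hfin⟩ := hvc
  -- torsion-free: elements with some positive power equal to 1 are trivial
  have htriv : ∀ g : G, ∀ n : ℕ, 0 < n → g ^ n = 1 → g = 1 := by
    intro g n hn hg
    by_contra hne
    exact htf g hne (isOfFinOrder_iff_pow_eq_one.mpr ⟨n, hn, hg⟩)
  rcases finite_or_infinite G with hGfin | hGinf
  · -- a finite torsion-free group is trivial, hence cyclic
    have : Subsingleton G := by
      constructor
      intro a b
      have ha : a = 1 := htriv a (Nat.card G) Nat.card_pos (pow_card_eq_one')
      have hb : b = 1 := htriv b (Nat.card G) Nat.card_pos (pow_card_eq_one')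
      rw [ha, hb]
    exact isCyclic_of_subsingleton
  · haveI := hfin
    set N : Subgroup G := H.normalCore with hNdef
    haveI hNnorm : N.Normal := H.normalCore_normal
    haveI hNfin : N.FiniteIndex := Subgroup.finiteIndex_normalCore H
    haveI hNcyc : IsCyclic N := Subgroup.isCyclic_of_le H.normalCore_le
    obtain ⟨g₀, hg₀⟩ := hNcyc
    set h₀ : G := (g₀ : G) with hh₀
    have hNz : N = Subgroup.zpowers h₀ := by
      apply le_antisymm
      · intro x hx
        obtain ⟨k, hk⟩ := hg₀ ⟨x, hx⟩
        exact ⟨k, by simpa using congrArg Subtype.val hk⟩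
      · rw [Subgroup.zpowers_le]
        exact g₀.2
    -- h₀ is nontrivial since G is infinite
    have hne : h₀ ≠ 1 := by
      intro h1
      have : N = ⊥ := by
        rw [hNz, h1, Subgroup.zpowers_one_eq_bot]
      haveI : Finite N := by rw [this]; infer_instance
      haveI : Finite (G ⧸ N) := N.finite_quotient_of_finiteIndex
      have : Finite G := Finite.of_equiv _ (Subgroup.groupEquivQuotientProdSubgroup (s := N)).symm
      exact not_finite G
    have hord : ¬ IsOfFinOrder h₀ := htf h₀ hne
    have hzinj : Function.Injective fun n : ℤ => h₀ ^ n :=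
      injective_zpow_iff_not_isOfFinOrder.mpr hord
    have hidx : 0 < N.index := Nat.pos_of_ne_zero hNfin.index_ne_zero
    -- every element of G commutes with h₀
    have hcomm : ∀ g : G, g * h₀ * g⁻¹ = h₀ := by
      intro g
      have h1 : g * h₀ * g⁻¹ ∈ N := hNnorm.conj_mem h₀ (hNz ▸ Subgroup.mem_zpowers h₀) g
      have h2 : g⁻¹ * h₀ * g ∈ N := by
        have := hNnorm.conj_mem h₀ (hNz ▸ Subgroup.mem_zpowers h₀) g⁻¹
        simpa using this
      rw [hNz] at h1 h2
      obtain ⟨k, hk⟩ := h1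
      obtain ⟨m, hm⟩ := h2
      simp only at hk hm
      have hconj_pow : ∀ j : ℤ, g * h₀ ^ j * g⁻¹ = h₀ ^ (k * j) := by
        intro j
        rw [zpow_mul, hk, conj_zpow]
      have hkm : m * k = 1 := by
        have h5 : h₀ ^ (m * k) = h₀ ^ (1 : ℤ) := by
          rw [zpow_mul, hm, zpow_one]
          calc (g⁻¹ * h₀ * g) ^ k = g⁻¹ * h₀ ^ k * g⁻¹⁻¹ := by
                rw [← conj_zpow]; group
            _ = g⁻¹ * (g * h₀ * g⁻¹) * g⁻¹⁻¹ := by rw [hk]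
            _ = h₀ := by group
        exact hzinj h5
      have hk1 : k = 1 ∨ k = -1 :=
        Int.isUnit_iff.mp (IsUnit.of_mul_eq_one (a := k) m (by rw [mul_comm]; exact hkm))
      rcases hk1 with hk1 | hk1
      · rw [hk1, zpow_one] at hk; exact hk.symm
      · -- inversion case: derive a contradiction
        exfalso
        rw [hk1] at hk
        have hgN : g ^ N.index ∈ Subgroup.zpowers h₀ := by
          rw [← hNz]; exact N.pow_index_mem g
        obtain ⟨j, hj⟩ := hgN
        simp only at hj
        have h3 : g * h₀ ^ j * g⁻¹ = h₀ ^ (-j) := by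
          rw [hconj_pow j, hk1]; ring_nf
        have h4 : g * h₀ ^ j * g⁻¹ = h₀ ^ j := by
          rw [hj]
          group
        have hj0 : j = 0 := by
          have := hzinj (h4.symm.trans h3)
          omega
        have hg1 : g = 1 := htriv g N.index hidx (by rw [← hj, hj0, zpow_zero])
        rw [hg1, one_mul, inv_one, mul_one] at hk
        have h6 : h₀ ^ (2 : ℕ) = 1 := by
          rw [pow_two]
          nth_rewrite 2 [← hk]
          simp
        exact hne (htriv h₀ 2 (by norm_num) h6)
    -- hence h₀ is central, so the center has finite index
    have hcen : h₀ ∈ Subgroup.center G := by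
      rw [Subgroup.mem_center_iff]
      intro g
      have := hcomm g
      calc g * h₀ = g * h₀ * g⁻¹ * g := by group
        _ = h₀ * g := by rw [this]
    have hNle : N ≤ Subgroup.center G := by
      rw [hNz, Subgroup.zpowers_le]
      exact hcen
    haveI : (Subgroup.center G).FiniteIndex := Subgroup.finiteIndex_of_le hNle
    -- transfer homomorphism into the (abelian) center is injective, so G is abelian
    have habel : ∀ a b : G, a * b = b * a := by
      have hinj : Function.Injective (MonoidHom.transferCenterPow G) := by
        rw [injective_iff_map_eq_one]
        intro a ha
        have : (a : G) ^ (Subgroup.center G).index = 1 := by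
          have := congrArg Subtype.val ha
          rwa [MonoidHom.transferCenterPow_apply] at this
        exact htriv a _ (Nat.pos_of_ne_zero Subgroup.FiniteIndex.index_ne_zero) this
      intro a b
      apply hinj
      rw [map_mul, map_mul]; exact Subtype.ext (Subgroup.mem_center_iff.mp (Subtype.prop _) _)
    -- the map g ↦ (exponent of g ^ N.index in powers of h₀) embeds G into ℤ
    have hspec : ∀ g : G, ∃ k : ℤ, h₀ ^ k = g ^ N.index := by
      intro g
      have hmem : g ^ N.index ∈ Subgroup.zpowers h₀ := by
        rw [← hNz]; exact N.pow_index_mem g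
      exact hmem
    set k : G → ℤ := fun g => Classical.choose (hspec g) with hkdef
    have hk : ∀ g : G, h₀ ^ (k g) = g ^ N.index := fun g => Classical.choose_spec (hspec g)
    have hmul : ∀ a b : G, k (a * b) = k a + k b := by
      intro a b
      apply hzinj
      simp only
      rw [hk, zpow_add, hk, hk]
      have hab : Commute a b := habel a b
      exact hab.mul_pow N.index
    have hone : k 1 = 0 := by
      apply hzinj
      simp only
      rw [hk, one_pow, zpow_zero]
    let φ : G →* Multiplicative ℤ :=
      { toFun := fun g => Multiplicative.ofAdd (k g)
        map_one' := by simp [hone]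
        map_mul' := by intro a b; simp [hmul, ofAdd_add] }
    have hφinj : Function.Injective φ := by
      rw [injective_iff_map_eq_one]
      intro a ha
      have hka : k a = 0 := by
        simpa [φ] using ha
      have : a ^ N.index = 1 := by rw [← hk a, hka, zpow_zero]
      exact htriv a N.index hidx this
    haveI : IsCyclic φ.range := Subgroup.isCyclic _
    exact isCyclic_of_surjective (MonoidHom.ofInjective hφinj).symm
      (MonoidHom.ofInjective hφinj).symm.surjective
end

section
/- Let G be a group such that the centralizer C_G(g) is virtually cyclic for every g ∈ G \ {1} (G is a VCC group). If G is not virtually cyclic, then G is ICC, i.e. the conjugacy class {h g h^{-1} : h ∈ G} is infinite for every g ∈ G \ {1}. -/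
/-- If the centralizer of every nontrivial element of `G` is virtually cyclic (VCC)
and `G` is not virtually cyclic, then `G` is ICC: every nontrivial conjugacy class
is infinite. -/
theorem stmt_2 (G : Type*) [Group G]
    (hvcc : ∀ g : G, g ≠ 1 → VirtuallyCyclic (Subgroup.centralizer {g}))
    (hnvc : ¬ VirtuallyCyclic G) :
    ∀ g : G, g ≠ 1 → {x : G | ∃ h : G, x = h * g * h⁻¹}.Infinite := by
  intro g hg
  by_contra hfin
  rw [Set.not_infinite] at hfin
  set C := Subgroup.centralizer ({g} : Set G) with hC
  set f : G ⧸ C → G := fun q => Quotient.liftOn' q (fun h => h * g * h⁻¹) (by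
      intro a b hab
      have hab' : a⁻¹ * b ∈ C := QuotientGroup.leftRel_apply.mp hab
      have hcomm : (a⁻¹ * b) * g = g * (a⁻¹ * b) :=
        Subgroup.mem_centralizer_singleton_iff.mp hab'
      show a * g * a⁻¹ = b * g * b⁻¹
      have : b * g * b⁻¹ = a * ((a⁻¹ * b) * g * (a⁻¹ * b)⁻¹) * a⁻¹ := by group
      rw [this, hcomm]
      group) with hf
  have hfmk : ∀ a : G, f (QuotientGroup.mk a) = a * g * a⁻¹ := fun a => rfl
  have hinj : Function.Injective f := by
    intro q₁ q₂ h
    refine Quotient.inductionOn₂' q₁ q₂ (fun a b h => ?_) h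
    rw [show (Quotient.mk'' a : G ⧸ C) = QuotientGroup.mk a from rfl,
      show (Quotient.mk'' b : G ⧸ C) = QuotientGroup.mk b from rfl, hfmk, hfmk] at h
    refine Quotient.sound' (QuotientGroup.leftRel_apply.mpr ?_)
    rw [Subgroup.mem_centralizer_singleton_iff]
    have : g * (a⁻¹ * b) = a⁻¹ * (a * g * a⁻¹) * b := by group
    rw [this, h]
    group
  have hrange : Set.range f ⊆ {x : G | ∃ h : G, x = h * g * h⁻¹} := by
    rintro x ⟨q, rfl⟩
    refine Quotient.inductionOn' q (fun a => ?_)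
    exact ⟨a, rfl⟩
  have hfr : Finite (Set.range f) := (hfin.subset hrange).to_subtype
  have hfinq : Finite (G ⧸ C) := Finite.of_injective_finite_range hinj
  have hCfi : C.FiniteIndex := C.finiteIndex_of_finite_quotient
  obtain ⟨H, hHcyc, hHfi⟩ := hvcc g hg
  apply hnvc
  refine ⟨H.map C.subtype, ?_, ?_⟩
  · exact isCyclic_of_surjective (H.equivMapOfInjective C.subtype C.subtype_injective).toMonoidHom
      (H.equivMapOfInjective C.subtype C.subtype_injective).surjective
  · constructor
    rw [Subgroup.index_map_subtype]
    exact Nat.mul_ne_zero hHfi.index_ne_zero hCfi.index_ne_zero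
end

section
/- Let G be a VCC group (the centralizer of every nontrivial element is virtually cyclic) which is not virtually cyclic. Then every normal abelian subgroup of G is trivial. -/
private lemma isCyclic_of_injective' {H C : Type*} [Group H] [Group C] [IsCyclic C]
    (f : H →* C) (hf : Function.Injective f) : IsCyclic H := by
  have e : H ≃* f.range := MonoidHom.ofInjective hf
  have : IsCyclic f.range := Subgroup.isCyclic _
  exact isCyclic_of_surjective e.symm e.symm.surjective

/-- A subgroup of a virtually cyclic group is virtually cyclic. -/
private lemma vc_subgroup {G : Type*} [Group G] (h : VirtuallyCyclic G) (K : Subgroup G) :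
    VirtuallyCyclic K := by
  obtain ⟨C, hCc, hCi⟩ := h
  refine ⟨C.subgroupOf K, ?_, ?_⟩
  · exact isCyclic_of_injective'
      (f := { toFun := fun x => (⟨(x : G), x.2⟩ : C),
              map_one' := rfl, map_mul' := fun _ _ => rfl })
      (fun x y hxy => by
        have := Subtype.ext_iff.mp hxy
        exact Subtype.ext (Subtype.ext this))
  · exact Subgroup.instFiniteIndex_subgroupOf C K

/-- A group with a virtually cyclic finite-index subgroup is virtually cyclic. -/
private lemma vc_of_finiteIndex {G : Type*} [Group G] (K : Subgroup G) (hK : K.FiniteIndex)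
    (h : VirtuallyCyclic K) : VirtuallyCyclic G := by
  obtain ⟨C, hCc, hCi⟩ := h
  refine ⟨C.map K.subtype, ?_, ?_⟩
  · have e := Subgroup.equivMapOfInjective C K.subtype K.subtype_injective
    exact isCyclic_of_surjective e e.surjective
  · refine ⟨?_⟩
    rw [Subgroup.index_map_subtype]
    exact Nat.mul_ne_zero hCi.index_ne_zero hK.index_ne_zero

/-- Virtual cyclicity transfers along group isomorphisms. -/
private lemma vc_of_mulEquiv {G H : Type*} [Group G] [Group H] (e : G ≃* H)
    (h : VirtuallyCyclic G) : VirtuallyCyclic H := by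
  obtain ⟨C, hCc, hCi⟩ := h
  refine ⟨C.map e.toMonoidHom, ?_, ?_⟩
  · have e' := Subgroup.equivMapOfInjective C e.toMonoidHom e.injective
    exact isCyclic_of_surjective e' e'.surjective
  · refine ⟨?_⟩
    rw [Subgroup.index_map_of_injective _ e.injective,
      MonoidHom.range_eq_top_of_surjective _ e.surjective, Subgroup.index_top, mul_one]
    exact hCi.index_ne_zero

/-- In an abelian virtually cyclic group, the orbit of any element under all
automorphisms is contained in a finite set. -/
private lemma key_finite_orbit {A : Type*} [Group A] (hcomm : ∀ x y : A, x * y = y * x)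
    (hvc : VirtuallyCyclic A) (a : A) :
    ∃ S : Set A, S.Finite ∧ ∀ φ : A ≃* A, φ a ∈ S := by
  by_cases hfin : Finite A
  · exact ⟨Set.univ, Set.finite_univ, fun _ => Set.mem_univ _⟩
  obtain ⟨C, hCc, hCi⟩ := hvc
  haveI := hCi
  haveI : Finite (A ⧸ C) := Subgroup.finite_quotient_of_finiteIndex
  haveI : Infinite C := by
    by_contra hfC
    haveI : Finite C := not_infinite_iff_finite.mp hfC
    exact hfin (Finite.of_equiv ((A ⧸ C) × ↥C) Subgroup.groupEquivQuotientProdSubgroup.symm)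
  obtain ⟨c0, hc0⟩ := hCc.exists_generator
  set c : A := (c0 : A) with hc
  have hcord : ¬ IsOfFinOrder c := by
    have h0 : orderOf c0 = 0 := Infinite.orderOf_eq_zero_of_forall_mem_zpowers hc0
    rw [← orderOf_eq_zero_iff, Subgroup.orderOf_coe, h0]
  have hinj : Function.Injective fun k : ℤ => c ^ k :=
    injective_zpow_iff_not_isOfFinOrder.mpr hcord
  set n : ℕ := C.index with hn
  have hn0 : n ≠ 0 := hCi.index_ne_zero
  haveI hCn : C.Normal := ⟨fun x hx g => by
    rw [hcomm g x, mul_assoc, mul_inv_cancel, mul_one]; exact hx⟩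
  have hmem : ∀ x : A, ∃ k : ℤ, x ^ n = c ^ k := by
    intro x
    obtain ⟨k, hk⟩ := Subgroup.mem_zpowers_iff.mp (hc0 ⟨x ^ n, C.pow_index_mem x⟩)
    refine ⟨k, ?_⟩
    have := congrArg (Subtype.val) hk
    simpa [hc] using this.symm
  choose v hv using hmem
  -- elements with equal `n`-th powers in the same coset of `C` coincide
  have hfiber : ∀ x y : A, x ^ n = y ^ n → ((x : A ⧸ C) = (y : A ⧸ C)) → x = y := by
    intro x y hxy hq
    have hm : x⁻¹ * y ∈ C := (QuotientGroup.eq).mp hq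
    obtain ⟨k, hk⟩ := Subgroup.mem_zpowers_iff.mp (hc0 ⟨x⁻¹ * y, hm⟩)
    have hk' : c ^ k = x⁻¹ * y := by
      have := congrArg (Subtype.val) hk
      simpa [hc] using this
    have hcomm' : Commute x⁻¹ y := hcomm x⁻¹ y
    have hpow1 : (x⁻¹ * y) ^ n = 1 := by
      rw [hcomm'.mul_pow, inv_pow, hxy, inv_mul_cancel]
    have : c ^ (k * (n : ℤ)) = c ^ (0 : ℤ) := by
      rw [zpow_mul, hk', zpow_natCast, hpow1, zpow_zero]
    have hk0 : k * (n : ℤ) = 0 := hinj this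
    have : k = 0 := by
      rcases mul_eq_zero.mp hk0 with h | h
      · exact h
      · exact absurd (by exact_mod_cast h) hn0
    have : x⁻¹ * y = 1 := by rw [← hk', this, zpow_zero]
    rw [← inv_mul_cancel x] at this
    exact (mul_left_cancel this).symm
  -- each fiber of `x ↦ x ^ n` is finite
  have hTfin : ∀ k : ℤ, {x : A | x ^ n = c ^ k}.Finite := by
    intro k
    have hi : Function.Injective
        (fun x : {x : A | x ^ n = c ^ k} => ((x : A) : A ⧸ C)) := by
      intro x y hxy
      exact Subtype.ext (hfiber x y (x.2.trans y.2.symm) hxy)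
    exact Set.finite_coe_iff.mp (Finite.of_injective _ hi)
  set M : ℤ := |(n : ℤ) * v a| with hM
  refine ⟨⋃ k ∈ Set.Icc (-M) M, {x : A | x ^ n = c ^ k},
    Set.Finite.biUnion (Set.finite_Icc _ _) fun k _ => hTfin k, fun φ => ?_⟩
  -- the key identity
  have hkey : ∀ (ψ : A →* A) (x : A), v (ψ c) * v x = (n : ℤ) * v (ψ x) := by
    intro ψ x
    apply hinj
    show c ^ (v (ψ c) * v x) = c ^ ((n : ℤ) * v (ψ x))
    calc c ^ (v (ψ c) * v x) = (c ^ v (ψ c)) ^ v x := by rw [zpow_mul]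
      _ = ((ψ c) ^ n) ^ (v x) := by rw [hv (ψ c)]
      _ = (ψ c) ^ ((n : ℤ) * v x) := by rw [← zpow_natCast, ← zpow_mul]
      _ = ψ (c ^ ((n : ℤ) * v x)) := by rw [map_zpow]
      _ = ψ ((c ^ (v x)) ^ (n : ℤ)) := by rw [← zpow_mul, mul_comm]
      _ = ψ ((x ^ n) ^ (n : ℤ)) := by rw [hv x]
      _ = ((ψ x) ^ n) ^ (n : ℤ) := by rw [map_zpow, map_pow]
      _ = (c ^ (v (ψ x))) ^ (n : ℤ) := by rw [hv (ψ x)]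
      _ = c ^ ((n : ℤ) * v (ψ x)) := by rw [← zpow_mul, mul_comm]
  have h2 : v (φ.symm c) * v (φ a) = (n : ℤ) * v a := by
    have := hkey φ.symm.toMonoidHom (φ a)
    simpa [φ.symm_apply_apply] using this
  have hψ : v (φ.symm c) ≠ 0 := by
    intro h0
    apply hcord
    have h1 : (φ.symm c) ^ n = 1 := by rw [hv (φ.symm c), h0, zpow_zero]
    have h2' : c ^ n = 1 := by
      have := congrArg φ h1
      rwa [map_pow, map_one, φ.apply_symm_apply] at this
    exact isOfFinOrder_iff_pow_eq_one.mpr ⟨n, Nat.pos_of_ne_zero hn0, h2'⟩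
  have hb : |v (φ a)| ≤ M := by
    have habs : |v (φ.symm c)| * |v (φ a)| = M := by rw [← abs_mul, h2]
    have h1 : 1 ≤ |v (φ.symm c)| := Int.one_le_abs (by simpa using hψ)
    nlinarith [abs_nonneg (v (φ a))]
  exact Set.mem_biUnion (Set.mem_Icc.mpr (abs_le.mp hb)) (hv (φ a))

/-- If the centralizer of every nontrivial element of `G` is virtually cyclic (VCC)
and `G` is not virtually cyclic, then every normal abelian subgroup of `G` is trivial. -/
theorem stmt_4 (G : Type*) [Group G]
    (hvcc : ∀ g : G, g ≠ 1 → VirtuallyCyclic (Subgroup.centralizer {g}))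
    (hnvc : ¬ VirtuallyCyclic G)
    (N : Subgroup G) (hN : N.Normal) (habel : ∀ a ∈ N, ∀ b ∈ N, a * b = b * a) :
    N = ⊥ := by
  by_contra hne
  obtain ⟨a, haN, ha1⟩ := (N.bot_or_exists_ne_one).resolve_left hne
  set Z := Subgroup.centralizer {a} with hZ
  have hZvc := hvcc a ha1
  have hNZ : N ≤ Z := fun b hb => Subgroup.mem_centralizer_singleton_iff.mpr (habel b hb a haN)
  -- N is virtually cyclic
  have hNvc : VirtuallyCyclic N :=
    vc_of_mulEquiv (Subgroup.subgroupOfEquivOfLe hNZ) (vc_subgroup hZvc (N.subgroupOf Z))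
  have hcomm : ∀ x y : ↥N, x * y = y * x := fun x y =>
    Subtype.ext (habel x x.2 y y.2)
  obtain ⟨S, hSfin, hS⟩ := key_finite_orbit hcomm hNvc ⟨a, haN⟩
  -- the conjugacy class of `a` is finite, so `Z` has finite index
  let F : G → ↥S := fun g => ⟨MulAut.conjNormal g ⟨a, haN⟩, hS _⟩
  have hconst : ∀ g g' : G, (QuotientGroup.leftRel Z) g g' → F g = F g' := by
    intro g g' hgg
    rw [QuotientGroup.leftRel_apply] at hgg
    have hx : (g⁻¹ * g') * a = a * (g⁻¹ * g') :=
      Subgroup.mem_centralizer_singleton_iff.mp hgg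
    apply Subtype.ext
    apply Subtype.ext
    show g * a * g⁻¹ = g' * a * g'⁻¹
    calc g * a * g⁻¹ = g * ((a * (g⁻¹ * g')) * (g⁻¹ * g')⁻¹) * g⁻¹ := by group
      _ = g * (((g⁻¹ * g') * a) * (g⁻¹ * g')⁻¹) * g⁻¹ := by rw [hx]
      _ = g' * a * g'⁻¹ := by group
  let f : G ⧸ Z → ↥S := Quotient.lift F hconst
  have hfinj : Function.Injective f := by
    intro q1 q2
    refine Quotient.inductionOn₂ q1 q2 (fun g g' h => ?_)
    have hC : g * a * g⁻¹ = g' * a * g'⁻¹ := by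
      have := Subtype.ext_iff.mp (Subtype.ext_iff.mp h)
      exact this
    apply (QuotientGroup.eq (s := Z)).mpr
    apply Subgroup.mem_centralizer_singleton_iff.mpr
    calc (g⁻¹ * g') * a = g⁻¹ * (g' * a * g'⁻¹) * g' := by group
      _ = g⁻¹ * (g * a * g⁻¹) * g' := by rw [hC]
      _ = a * (g⁻¹ * g') := by group
  haveI : Finite ↥S := hSfin.to_subtype
  haveI : Finite (G ⧸ Z) := Finite.of_injective f hfinj
  have hZfi : Z.FiniteIndex := ⟨Subgroup.index_ne_zero_of_finite⟩
  exact hnvc (vc_of_finiteIndex Z hZfi hZvc)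
end

section
/- Let K, H be groups and γ, γ' : K → H homomorphisms. Suppose F ⊆ H is a finite nonempty set with γ(g) F γ'(g)^{-1} = F for all g ∈ K, and suppose that for every h ∈ H \ {1} the set {γ(g) h γ(g)^{-1} : g ∈ K} is infinite. Then F = {h₀} is a singleton and γ(g) h₀ = h₀ γ'(g) for all g ∈ K; in particular γ and γ' are conjugate in H. -/
open scoped Pointwise

/-- If a finite nonempty subset `F ⊆ H` satisfies `γ(g) F γ'(g)⁻¹ = F` for all `g ∈ K`,
and every nontrivial element of `H` has infinite conjugation orbit under `γ(K)`, then
`F` is a singleton `{h₀}` with `γ(g) h₀ = h₀ γ'(g)` for all `g`; in particular `γ` and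
`γ'` are conjugate. -/
theorem stmt_6 (K H : Type*) [Group K] [Group H] (γ γ' : K →* H)
    (F : Finset H) (hne : F.Nonempty)
    (hF : ∀ g : K, (fun x => γ g * x * (γ' g)⁻¹) '' (F : Set H) = (F : Set H))
    (hcent : ∀ h : H, h ≠ 1 → {x : H | ∃ g : K, x = γ g * h * (γ g)⁻¹}.Infinite) :
    ∃ h₀ : H, (F : Set H) = {h₀} ∧ ∀ g : K, γ g * h₀ = h₀ * γ' g := by
  classical
  obtain ⟨h₀, hh₀⟩ := hne
  have hmem : ∀ g : K, ∀ x ∈ F, γ g * x * (γ' g)⁻¹ ∈ F := by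
    intro g x hx
    have h1 : γ g * x * (γ' g)⁻¹ ∈ (fun x => γ g * x * (γ' g)⁻¹) '' (F : Set H) :=
      ⟨x, hx, rfl⟩
    rw [hF g] at h1
    exact h1
  have hsingle : ∀ x ∈ F, x = h₀ := by
    intro x hx
    by_contra hne'
    have hh : x * h₀⁻¹ ≠ 1 := by
      intro h; exact hne' (mul_inv_eq_one.mp h)
    have hsub : {y : H | ∃ g : K, y = γ g * (x * h₀⁻¹) * (γ g)⁻¹} ⊆ ↑(F * F⁻¹) := by
      rintro y ⟨g, rfl⟩
      have h1 : γ g * x * (γ' g)⁻¹ ∈ F := hmem g x hx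
      have h2 : γ g * h₀ * (γ' g)⁻¹ ∈ F := hmem g h₀ hh₀
      have : γ g * (x * h₀⁻¹) * (γ g)⁻¹
          = (γ g * x * (γ' g)⁻¹) * (γ g * h₀ * (γ' g)⁻¹)⁻¹ := by group
      rw [this]
      exact_mod_cast Finset.mul_mem_mul h1 (Finset.inv_mem_inv h2)
    exact hcent _ hh (Set.Finite.subset (F * F⁻¹).finite_toSet hsub)
  refine ⟨h₀, ?_, ?_⟩
  · ext x
    simp only [Set.mem_singleton_iff, Finset.mem_coe]
    exact ⟨fun h => hsingle x h, fun h => h ▸ hh₀⟩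
  · intro g
    have := hsingle _ (hmem g h₀ hh₀)
    calc γ g * h₀ = (γ g * h₀ * (γ' g)⁻¹) * γ' g := by group
    _ = h₀ * γ' g := by rw [this]
end

section
/- Let S, D be groups, ε, ε' : S → D homomorphisms, and F ⊆ D a finite set such that F ε(h) F ∩ F ε'(h) F ≠ ∅ for every h ∈ S. Assume that for every d ∈ D \ {1} the set {ε(h) d ε(h)^{-1} : h ∈ S} is infinite. Then there exists g ∈ D such that ε(h) = g ε'(h) g^{-1} for every h ∈ S. -/
open scoped Pointwise

section Aux

variable {S D : Type*} [Group S] [Group D]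

/-- The subgroup of `S` on which `ε` equals `g ε' g⁻¹`. -/
def conjAgreeSub (ε ε' : S →* D) (g : D) : Subgroup S where
  carrier := {s : S | ε s = g * ε' s * g⁻¹}
  one_mem' := by simp
  mul_mem' := by
    intro x y hx hy
    simp only [Set.mem_setOf_eq, map_mul] at *
    rw [hx, hy]; group
  inv_mem' := by
    intro x hx
    simp only [Set.mem_setOf_eq, map_inv] at *
    rw [hx]; group

theorem mem_conjAgreeSub {ε ε' : S →* D} {g : D} {s : S} :
    s ∈ conjAgreeSub ε ε' g ↔ ε s = g * ε' s * g⁻¹ := Iff.rfl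

/-- If two elements satisfy the same "sandwich" relation, the left quotient satisfies
the conjugation relation with `b⁻¹`. -/
theorem sandwich_quot {ε ε' : S →* D} {a b : D} {x y : S}
    (hx : ε x = a * ε' x * b) (hy : ε y = a * ε' y * b) :
    ε (y⁻¹ * x) = b⁻¹ * ε' (y⁻¹ * x) * (b⁻¹)⁻¹ := by
  have : ε (y⁻¹ * x) = (ε y)⁻¹ * ε x := by
    rw [map_mul, map_inv]
  rw [this, hx, hy, map_mul, map_inv]
  group

/-- If the conjugating subgroup has finite index, the conjugation relation holds globally. -/
theorem conjAgree_of_finiteIndex {ε ε' : S →* D} {g : D}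
    (hfi : (conjAgreeSub ε ε' g).FiniteIndex)
    (hcent : ∀ d : D, d ≠ 1 → {x : D | ∃ h : S, x = ε h * d * (ε h)⁻¹}.Infinite) :
    ∀ h : S, ε h = g * ε' h * g⁻¹ := by
  classical
  set R := conjAgreeSub ε ε' g with hR
  set N := R.normalCore with hN
  haveI : R.FiniteIndex := hfi
  haveI : N.FiniteIndex := Subgroup.finiteIndex_normalCore R
  haveI : Finite (S ⧸ N) := Subgroup.finite_quotient_of_finiteIndex
  intro k
  set d : D := ε k * (g * ε' k * g⁻¹)⁻¹ with hd
  -- key: elements of N fix d under ε-conjugation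
  have key : ∀ n ∈ N, ε n * d * (ε n)⁻¹ = d := by
    intro n hn
    have hnR : n ∈ R := Subgroup.normalCore_le R hn
    have hn' : k⁻¹ * n * k ∈ N := by
      have := (Subgroup.normalCore_normal R).conj_mem n hn k⁻¹
      simpa using this
    have hnR' : k⁻¹ * n * k ∈ R := Subgroup.normalCore_le R hn'
    rw [mem_conjAgreeSub] at hnR hnR'
    have e1 : ε n * ε k = ε k * ε (k⁻¹ * n * k) := by
      have hnk : n * k = k * (k⁻¹ * n * k) := by group
      rw [← map_mul, hnk, map_mul]
    have e2 : ε (k⁻¹ * n * k) = g * ε' (k⁻¹ * n * k) * g⁻¹ := hnR'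
    have e3 : ε' (k⁻¹ * n * k) = (ε' k)⁻¹ * ε' n * ε' k := by
      rw [map_mul, map_mul, map_inv]
    calc ε n * d * (ε n)⁻¹
        = ε n * ε k * (g * ε' k * g⁻¹)⁻¹ * (ε n)⁻¹ := by rw [hd]; group
      _ = ε k * ε (k⁻¹ * n * k) * (g * ε' k * g⁻¹)⁻¹ * (ε n)⁻¹ := by rw [e1]
      _ = ε k * (g * ((ε' k)⁻¹ * ε' n * ε' k) * g⁻¹) * (g * ε' k * g⁻¹)⁻¹ * (ε n)⁻¹ := by
          rw [e2, e3]
      _ = ε k * (g * ε' k * g⁻¹)⁻¹ * (g * ε' n * g⁻¹) * (ε n)⁻¹ := by group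
      _ = d := by rw [← hnR, hd]; group
  -- the conjugation orbit of d is finite, being a quotient of S ⧸ N
  have hfin : {x : D | ∃ h : S, x = ε h * d * (ε h)⁻¹}.Finite := by
    have hwd : ∀ a b : S, (QuotientGroup.leftRel N) a b →
        ε a * d * (ε a)⁻¹ = ε b * d * (ε b)⁻¹ := by
      intro a b hab
      rw [QuotientGroup.leftRel_apply] at hab
      have hk2 := key _ hab
      have hbe : ε b = ε a * ε (a⁻¹ * b) := by
        rw [← map_mul, mul_inv_cancel_left]
      rw [hbe]
      calc ε a * d * (ε a)⁻¹
          = ε a * (ε (a⁻¹ * b) * d * (ε (a⁻¹ * b))⁻¹) * (ε a)⁻¹ := by rw [hk2]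
        _ = ε a * ε (a⁻¹ * b) * d * (ε a * ε (a⁻¹ * b))⁻¹ := by group
    let f : S ⧸ N → D := Quotient.lift (fun s : S => ε s * d * (ε s)⁻¹) hwd
    apply Set.Finite.subset (Set.finite_range f)
    rintro x ⟨h, rfl⟩
    exact ⟨QuotientGroup.mk h, rfl⟩
  by_cases hd1 : d = 1
  · have : ε k = g * ε' k * g⁻¹ := by
      have := hd1
      rw [hd] at this
      have h2 : ε k = (g * ε' k * g⁻¹) := by
        have := mul_inv_eq_one.mp this
        exact this
      exact h2
    exact this
  · exact absurd hfin (hcent d hd1)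

end Aux

/-- If `F ε(h) F ∩ F ε'(h) F ≠ ∅` for every `h ∈ S`, where `F ⊆ D` is finite, and every
nontrivial element of `D` has infinite conjugation orbit under `ε(S)`, then `ε` and `ε'`
are conjugate homomorphisms. -/
theorem stmt_7 (S D : Type*) [Group S] [Group D] (ε ε' : S →* D)
    (F : Finset D)
    (hF : ∀ h : S, ∃ f₁ ∈ F, ∃ f₂ ∈ F, ∃ f₃ ∈ F, ∃ f₄ ∈ F,
      f₁ * ε h * f₂ = f₃ * ε' h * f₄)
    (hcent : ∀ d : D, d ≠ 1 → {x : D | ∃ h : S, x = ε h * d * (ε h)⁻¹}.Infinite) :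
    ∃ g : D, ∀ h : S, ε h = g * ε' h * g⁻¹ := by
  classical
  choose c₁ hc₁ c₂ hc₂ c₃ hc₃ c₄ hc₄ heq using hF
  -- sandwich form: ε h = a_h * ε' h * b_h
  have hsand : ∀ h : S, ε h = ((c₁ h)⁻¹ * c₃ h) * ε' h * (c₄ h * (c₂ h)⁻¹) := by
    intro h
    have := heq h
    have : ε h = (c₁ h)⁻¹ * (c₃ h * ε' h * c₄ h) * (c₂ h)⁻¹ := by
      rw [← this]; group
    rw [this]; group
  -- index type: quadruples of elements of F
  let ι := (↥F) × (↥F) × (↥F) × (↥F)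
  let c : S → ι := fun h => (⟨c₁ h, hc₁ h⟩, ⟨c₂ h, hc₂ h⟩, ⟨c₃ h, hc₃ h⟩, ⟨c₄ h, hc₄ h⟩)
  -- conjugator associated to a quadruple (b⁻¹ = f₂ * f₄⁻¹)
  let G : ι → D := fun q => (q.2.1 : D) * (q.2.2.2 : D)⁻¹
  let H : ι → Subgroup S := fun q => conjAgreeSub ε ε' (G q)
  let rep : ι → S := fun q => if hq : ∃ h : S, c h = q then hq.choose else 1
  have hcover : ⋃ q ∈ (Finset.univ : Finset ι), (rep q) • ((H q) : Set S) = Set.univ := by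
    rw [Set.eq_univ_iff_forall]
    intro h
    rw [Set.mem_iUnion₂]
    refine ⟨c h, Finset.mem_univ _, ?_⟩
    have hq : ∃ h' : S, c h' = c h := ⟨h, rfl⟩
    have hrep : rep (c h) = hq.choose := dif_pos hq
    have hch : c hq.choose = c h := hq.choose_spec
    rw [mem_leftCoset_iff, hrep]
    rw [SetLike.mem_coe, mem_conjAgreeSub]
    -- components of c agree
    have h1 : c₁ hq.choose = c₁ h := congrArg (fun q : ι => (q.1 : D)) hch
    have h2 : c₂ hq.choose = c₂ h := congrArg (fun q : ι => (q.2.1 : D)) hch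
    have h3 : c₃ hq.choose = c₃ h := congrArg (fun q : ι => (q.2.2.1 : D)) hch
    have h4 : c₄ hq.choose = c₄ h := congrArg (fun q : ι => (q.2.2.2 : D)) hch
    have hx : ε h = ((c₁ h)⁻¹ * c₃ h) * ε' h * (c₄ h * (c₂ h)⁻¹) := hsand h
    have hy : ε hq.choose = ((c₁ h)⁻¹ * c₃ h) * ε' hq.choose * (c₄ h * (c₂ h)⁻¹) := by
      rw [hsand hq.choose, h1, h2, h3, h4]
    have := sandwich_quot hx hy
    have hG : G (c h) = (c₄ h * (c₂ h)⁻¹)⁻¹ := by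
      simp only [G, c]
      group
    rw [hG]
    simpa using this
  obtain ⟨q, -, hqfi⟩ := Subgroup.exists_finiteIndex_of_leftCoset_cover hcover
  exact ⟨G q, conjAgree_of_finiteIndex hqfi hcent⟩
end

section
/- Let A be a nontrivial abelian group, B a group acting on a set I, and G = (⊕_{i∈I} A) ⋊ B with the shift action. Let g = (f, b) ∈ G with b ≠ 1, and suppose the set {i ∈ I : b·i ≠ i} is infinite. Then the set {a g a^{-1} : a ∈ ⊕_{i∈I} A} is infinite. -/
/-- The shift action of `B` on the finitely supported functions `I →₀ A`
(written multiplicatively), given by `(b • f)(i) = f(b⁻¹ • i)`. -/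
noncomputable def shiftHom (A : Type*) [AddCommGroup A] (B I : Type*) [Group B]
    [MulAction B I] : B →* MulAut (Multiplicative (I →₀ A)) where
  toFun b := AddEquiv.toMultiplicative (Finsupp.domCongr (MulAction.toPerm b))
  map_one' := by
    refine MulEquiv.ext fun f => Multiplicative.toAdd.injective (Finsupp.ext fun i => ?_)
    simp [AddEquiv.toMultiplicative, Finsupp.domCongr, Finsupp.equivMapDomain_apply,
      MulAction.toPerm]
  map_mul' b₁ b₂ := by
    refine MulEquiv.ext fun f => Multiplicative.toAdd.injective (Finsupp.ext fun i => ?_)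
    simp [AddEquiv.toMultiplicative, Finsupp.domCongr, Finsupp.equivMapDomain_apply,
      MulAction.toPerm, mul_smul]


set_option maxHeartbeats 1000000 in
/-- In the semidirect product `G = (⊕_{i ∈ I} A) ⋊ B` with the shift action, if
`g = (f, b)` with `b ≠ 1` moving infinitely many coordinates and `A` is nontrivial,
then `g` has infinitely many conjugates by elements of the base `⊕_{i ∈ I} A`. -/
theorem stmt_16 (A : Type*) [AddCommGroup A] [Nontrivial A] (B I : Type*) [Group B]
    [MulAction B I]
    (g : SemidirectProduct (Multiplicative (I →₀ A)) B (shiftHom A B I))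
    (hb : g.right ≠ 1) (hmove : {i : I | g.right • i ≠ i}.Infinite) :
    {y : SemidirectProduct (Multiplicative (I →₀ A)) B (shiftHom A B I) |
      ∃ a : SemidirectProduct (Multiplicative (I →₀ A)) B (shiftHom A B I),
        a.right = 1 ∧ y = a * g * a⁻¹}.Infinite := by
  classical
  obtain ⟨x, hx⟩ := exists_ne (0 : A)
  set b := g.right with hbdef
  set F : I → SemidirectProduct (Multiplicative (I →₀ A)) B (shiftHom A B I) :=
    fun i => SemidirectProduct.inl (Multiplicative.ofAdd (Finsupp.single i x)) * g *
      (SemidirectProduct.inl (Multiplicative.ofAdd (Finsupp.single i x)))⁻¹ with hF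
  have hφ : ∀ i : I, (shiftHom A B I) b (Multiplicative.ofAdd (Finsupp.single i x))⁻¹
      = Multiplicative.ofAdd (-(Finsupp.single (b • i) x)) := by
    intro i
    simp only [shiftHom, MonoidHom.coe_mk, OneHom.coe_mk]
    have : (Multiplicative.ofAdd (Finsupp.single i x))⁻¹
        = Multiplicative.ofAdd (-(Finsupp.single i x)) := rfl
    rw [this]
    refine Multiplicative.toAdd.injective ?_
    simp [AddEquiv.toMultiplicative, Finsupp.domCongr, MulAction.toPerm]
    rw [← Finsupp.single_neg, Finsupp.equivMapDomain_single, Finsupp.single_neg]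
    rfl
  have hleft : ∀ i : I, Multiplicative.toAdd (F i).left
      = Finsupp.single i x + Multiplicative.toAdd g.left - Finsupp.single (b • i) x := by
    intro i
    have h1 : (SemidirectProduct.inl (φ := shiftHom A B I)
          (Multiplicative.ofAdd (Finsupp.single i x)))⁻¹
        = SemidirectProduct.inl (φ := shiftHom A B I)
          (Multiplicative.ofAdd (Finsupp.single i x))⁻¹ := by
      exact (map_inv (SemidirectProduct.inl (φ := shiftHom A B I))
        (Multiplicative.ofAdd (Finsupp.single i x))).symm
    rw [hF]
    simp only [h1, SemidirectProduct.mul_left, SemidirectProduct.mul_right,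
      SemidirectProduct.left_inl, SemidirectProduct.right_inl, map_one, one_mul,
      MulAut.one_apply, mul_one]
    rw [hφ i]
    rw [toAdd_mul, toAdd_mul, toAdd_ofAdd, toAdd_ofAdd]
    abel
  set S : Set I := {i : I | b • i ≠ i} with hS
  have hsub : F '' S ⊆ {y : SemidirectProduct (Multiplicative (I →₀ A)) B (shiftHom A B I) |
      ∃ a : SemidirectProduct (Multiplicative (I →₀ A)) B (shiftHom A B I),
        a.right = 1 ∧ y = a * g * a⁻¹} := by
    rintro y ⟨i, _, rfl⟩
    exact ⟨SemidirectProduct.inl (Multiplicative.ofAdd (Finsupp.single i x)),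
      SemidirectProduct.right_inl _, rfl⟩
  refine Set.Infinite.mono hsub ?_
  by_contra hnotinf
  rw [Set.not_infinite] at hnotinf
  have hSfin : S.Finite := by
    have hcover : S ⊆ ⋃ y ∈ F '' S, {i ∈ S | F i = y} := by
      intro i hi
      exact Set.mem_biUnion (Set.mem_image_of_mem F hi) ⟨hi, rfl⟩
    refine Set.Finite.subset (Set.Finite.biUnion hnotinf fun y _ => ?_) hcover
    refine Set.Finite.subset
      ((Multiplicative.toAdd y.left - Multiplicative.toAdd g.left).support.finite_toSet) ?_
    rintro i ⟨hiS, rfl⟩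
    have hval : (Multiplicative.toAdd (F i).left - Multiplicative.toAdd g.left) i = x := by
      rw [hleft i]
      have hne : ¬ (b • i = i) := hiS
      simp [Finsupp.single_apply, hne]
    simp only [Finset.coe_sort_coe, Finset.mem_coe, Finsupp.mem_support_iff]
    rw [hval]
    exact hx
  exact hmove hSfin
end

section
/- Let A be a nontrivial abelian group and B a group acting faithfully on a set I such that for every b ∈ B \ {1} the set {i ∈ I : b·i ≠ i} is infinite, and such that every B-orbit on I is infinite. If B is ICC, then the semidirect product G = (⊕_{i∈I} A) ⋊ B (with the shift action) is ICC. -/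
lemma toAdd_shiftHom (A : Type*) [AddCommGroup A] {B I : Type*} [Group B]
    [MulAction B I] (b : B) (f : Multiplicative (I →₀ A)) (i : I) :
    Multiplicative.toAdd (shiftHom A B I b f) i = Multiplicative.toAdd f (b⁻¹ • i) := by
  simp [shiftHom, AddEquiv.toMultiplicative, Finsupp.domCongr, Finsupp.equivMapDomain_apply,
    MulAction.toPerm]

/-- If `A` is a nontrivial abelian group and `B` acts faithfully on `I` with every
nontrivial element moving infinitely many points and all orbits infinite, and `B` is
ICC, then the semidirect product `G = (⊕_{i ∈ I} A) ⋊ B` with the shift action is ICC. -/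
theorem stmt_17 (A : Type*) [AddCommGroup A] [Nontrivial A] (B I : Type*) [Group B]
    [MulAction B I] [FaithfulSMul B I]
    (hmove : ∀ b : B, b ≠ 1 → {i : I | b • i ≠ i}.Infinite)
    (horb : ∀ x : I, (MulAction.orbit B x).Infinite)
    (hicc : ∀ b : B, b ≠ 1 → {x : B | ∃ c : B, x = c * b * c⁻¹}.Infinite) :
    ∀ g : SemidirectProduct (Multiplicative (I →₀ A)) B (shiftHom A B I), g ≠ 1 →
      {y : SemidirectProduct (Multiplicative (I →₀ A)) B (shiftHom A B I) |
        ∃ x : SemidirectProduct (Multiplicative (I →₀ A)) B (shiftHom A B I),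
          y = x * g * x⁻¹}.Infinite := by
  intro g hg
  obtain ⟨f, b⟩ := g
  by_cases hb : b = 1
  · -- b = 1, f ≠ 1
    subst hb
    have hf : f ≠ 1 := by
      intro h
      exact hg (by rw [h]; rfl)
    have hf' : Multiplicative.toAdd f ≠ 0 :=
      fun h => hf (Multiplicative.toAdd.injective (by simpa using h))
    obtain ⟨i₀, hi₀⟩ := Finsupp.ne_iff.mp hf'
    simp only [Finsupp.coe_zero, Pi.zero_apply] at hi₀
    have hW : (Set.range (fun c : B => shiftHom A B I c f)).Infinite := by
      intro hfin
      have horbsub : MulAction.orbit B i₀ ⊆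
          ⋃ h ∈ Set.range (fun c : B => shiftHom A B I c f),
            ((Multiplicative.toAdd h).support : Set I) := by
        rintro _ ⟨c, rfl⟩
        refine Set.mem_biUnion ⟨c, rfl⟩ ?_
        simp only [Finset.mem_coe, Finsupp.mem_support_iff]
        rw [toAdd_shiftHom]
        simpa using hi₀
      exact horb i₀ ((hfin.biUnion
        (fun h _ => (Multiplicative.toAdd h).support.finite_toSet)).subset horbsub)
    refine (hW.image (f := fun n =>
      (⟨n, 1⟩ : SemidirectProduct (Multiplicative (I →₀ A)) B (shiftHom A B I))) ?_).mono ?_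
    · exact Function.Injective.injOn (fun n m h => congrArg SemidirectProduct.left h)
    · rintro _ ⟨_, ⟨c, rfl⟩, rfl⟩
      refine ⟨⟨1, c⟩, ?_⟩
      ext
      · simp [SemidirectProduct.mul_left, SemidirectProduct.inv_left]
      · simp [SemidirectProduct.mul_right, SemidirectProduct.inv_right]
  · -- b ≠ 1
    obtain ⟨a, ha⟩ := exists_ne (0 : A)
    have hMinf := hmove b hb
    set v : I → (I →₀ A) := fun i => Finsupp.single i a - Finsupp.single (b • i) a with hv
    have hkey : ∀ i ∈ {i : I | b • i ≠ i}, ∀ j ∈ {i : I | b • i ≠ i},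
        v j = v i → j = i ∨ j = b • i := by
      intro i hi j hj hvij
      by_cases hji : j = i
      · exact Or.inl hji
      · have h2 := congrArg (fun (x : I →₀ A) => x j) hvij
        simp only [hv, Finsupp.sub_apply] at h2
        rw [Finsupp.single_eq_same, Finsupp.single_eq_of_ne' (hj : b • j ≠ j),
          Finsupp.single_eq_of_ne' (fun h => hji h.symm)] at h2
        by_cases hbi : b • i = j
        · exact Or.inr hbi.symm
        · rw [Finsupp.single_eq_of_ne' hbi] at h2
          exact absurd (by simpa using h2) ha
    have hVinf : (v '' {i : I | b • i ≠ i}).Infinite := by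
      intro hfin
      refine hMinf (Set.Finite.subset
        (hfin.biUnion (t := fun y => {j ∈ {i : I | b • i ≠ i} | v j = y}) (fun y hy => ?_))
        (fun i hi => Set.mem_biUnion (Set.mem_image_of_mem v hi) ⟨hi, rfl⟩))
      obtain ⟨i, hi, rfl⟩ := hy
      refine Set.Finite.subset ((Set.finite_singleton (b • i)).insert i) (fun j hj => ?_)
      rcases hkey i hi j hj.1 hj.2 with h | h
      · exact Set.mem_insert_iff.mpr (Or.inl h)
      · exact Set.mem_insert_iff.mpr (Or.inr (by simp [h]))
    refine (hVinf.image (f := fun m =>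
      (⟨Multiplicative.ofAdd (Multiplicative.toAdd f + m), b⟩ :
        SemidirectProduct (Multiplicative (I →₀ A)) B (shiftHom A B I))) ?_).mono ?_
    · refine Function.Injective.injOn (fun n m h => ?_)
      have h2 := congrArg SemidirectProduct.left h
      simpa using h2
    · rintro _ ⟨_, ⟨i, hi, rfl⟩, rfl⟩
      refine ⟨⟨Multiplicative.ofAdd (Finsupp.single i a), 1⟩, ?_⟩
      ext1
      · simp only [SemidirectProduct.mul_left, SemidirectProduct.inv_left,
          SemidirectProduct.mul_right, SemidirectProduct.inv_right]
        simp only [map_one, MulAut.one_apply, inv_one, mul_one, one_mul]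
        apply Multiplicative.toAdd.injective
        apply Finsupp.ext
        intro j
        simp only [toAdd_mul, Finsupp.add_apply, toAdd_ofAdd]
        have h1 : Multiplicative.toAdd
            ((shiftHom A B I b) (Multiplicative.ofAdd (Finsupp.single i a))⁻¹) j
            = -(Finsupp.single (b • i) a) j := by
          rw [toAdd_shiftHom]
          simp only [toAdd_inv, toAdd_ofAdd, Finsupp.neg_apply, neg_inj]
          by_cases hij : b • i = j
          · rw [← hij, inv_smul_smul, Finsupp.single_eq_same, Finsupp.single_eq_same]
          · rw [Finsupp.single_eq_of_ne' (fun h => hij (by rw [h, smul_inv_smul])),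
              Finsupp.single_eq_of_ne' hij]
        rw [h1]
        simp only [hv, Finsupp.add_apply, Finsupp.sub_apply]
        abel
      · simp [SemidirectProduct.mul_right, SemidirectProduct.inv_right]
end
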